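/- If the MS-Ordering property holds and every process delivers each message in exactly one set (delivering sets one element at a time), then the delivery order is a total order broadcast restricted case: when all delivered sets are singletons, all processes deliver all messages in the same sequence order up to the prefix relation. -/

import Mathlib

/-- When all delivered sets are singletons, MS-Ordering forces all processes to
deliver all messages in the same order: the delivery permutations coincide. -/
theorem singleton_deliveries_total_order {M : Type*} [Fintype M] [DecidableEq M]
    (n : ℕ) (e : Fin n → (M ≃ Fin (Fintype.card M)))
    (hMS : ∀ (i j : Fin n) (m m' : M), ¬ (e i m < e i m' ∧ e j m' < e j m)) :
    ∀ i j : Fin n, e i = e j := by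
  intro i j
  -- the composite permutation of Fin N is strictly monotone
  have hmono : StrictMono ((e j).symm.trans (e i)) := by
    intro a b hab
    set m := (e j).symm a with hm
    set m' := (e j).symm b with hm'
    have hj : e j m < e j m' := by simpa [hm, hm'] using hab
    have h1 := hMS i j m' m
    have hne : e i m ≠ e i m' := by
      intro h
      have : m = m' := (e i).injective h
      exact absurd hj (by simp [this])
    have : ¬ e i m' < e i m := fun h => h1 ⟨h, hj⟩
    simpa [Equiv.trans_apply, hm, hm'] using lt_of_le_of_ne (not_lt.mp this) hne
  have : ((e j).symm.trans (e i)) = Equiv.refl _ := by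
    have hid : ∀ k, ((e j).symm.trans (e i)) k = k := by
      intro k
      have hr : Set.range ((e j).symm.trans (e i)) = Set.range (id : Fin _ → Fin _) := by
        simp [Set.range_id, Equiv.range_eq_univ]
      have := (StrictMono.range_inj hmono strictMono_id).mp hr
      exact congrFun this k
    exact Equiv.ext hid
  have h2 : ∀ m, e i m = e j m := by
    intro m
    have := congrArg (fun f => f (e j m)) (congrArg Equiv.toFun this)
    simpa using this
  exact Equiv.ext h2
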